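/- arXiv:2507.15240 — 3 statements merged into one kernel-verified Lean document; each statement's English description precedes it below -/
import Mathlib

section
/- Suppose φ₁ and φ₂ are coordinate-wise monotone in the sense that φ_k(s) ≤ φ_k(s') whenever s_i ≤ s'_i for all i ∈ P and s_i ≥ s'_i for all i ∈ 𝒩 (k = 1, 2). If a triple (θ, s, t) is feasible for the indicator reformulation IND′, then the rounded triple (θ, r(θ,t), t) is also feasible for IND′, and moreover φ₁(r(θ,t)) ≥ φ₁(s). -/
open Finset

/-- The indicator `𝟙{a > t}` as a real number. -/
noncomputable def indi (a t : ℝ) : ℝ := if a > t then 1 else 0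

/-- `H_t(a,s) = s + [s+a−1−t]₊ − [s+a−t]₊`. -/
noncomputable def hng (t a s : ℝ) : ℝ := s + max (s + a - 1 - t) 0 - max (s + a - t) 0

/-- The predicted label vector `r(θ,t)_i = 𝟙{F θ i > t}`. -/
noncomputable def rvec {Θ I : Type*} (F : Θ → I → ℝ) (θ : Θ) (t : ℝ) (i : I) : ℝ :=
  indi (F θ i) t

/-- `(θ,t)` is non-singular if `F θ i ≠ t` for all `i`. -/
def NonSingular {Θ I : Type*} (F : Θ → I → ℝ) (θ : Θ) (t : ℝ) : Prop := ∀ i, F θ i ≠ t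

/-- `(θ,t)` is feasible for the DMO problem: `t ∈ [0,1]` and `φ₂(r(θ,t)) ≥ α`. -/
def DMOFeasible {Θ I : Type*} (φ₂ : (I → ℝ) → ℝ) (α : ℝ) (F : Θ → I → ℝ)
    (θ : Θ) (t : ℝ) : Prop :=
  t ∈ Set.Icc (0 : ℝ) 1 ∧ φ₂ (rvec F θ t) ≥ α

/-- `(θ,s,t)` is feasible for the indicator reformulation IND′. -/
def INDFeasible {Θ I : Type*} (P N : Finset I) (φ₂ : (I → ℝ) → ℝ) (α : ℝ)
    (F : Θ → I → ℝ) (θ : Θ) (s : I → ℝ) (t : ℝ) : Prop :=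
  (∀ i, s i ∈ Set.Icc (0 : ℝ) 1) ∧ t ∈ Set.Icc (0 : ℝ) 1 ∧
  φ₂ s ≥ α ∧
  (∀ i ∈ P, s i ≤ indi (F θ i) t) ∧ (∀ i ∈ N, indi (F θ i) t ≤ s i)

/-- `(θ,s,t)` is feasible for the hinge reformulation HNG′. -/
def HNGFeasible {Θ I : Type*} (P N : Finset I) (φ₂ : (I → ℝ) → ℝ) (α : ℝ)
    (F : Θ → I → ℝ) (θ : Θ) (s : I → ℝ) (t : ℝ) : Prop :=
  (∀ i, s i ∈ Set.Icc (0 : ℝ) 1) ∧ t ∈ Set.Icc (0 : ℝ) 1 ∧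
  φ₂ s ≥ α ∧
  (∀ i ∈ P, hng t (F θ i) (s i) ≤ 0) ∧ (∀ i ∈ N, 0 ≤ hng t (F θ i) (s i))

/-- `φ` is coordinate-wise monotone: nondecreasing in coordinates in `P` and
nonincreasing in coordinates in `N`, over `[0,1]^I`. -/
def CoordMonotone {I : Type*} (P N : Finset I) (φ : (I → ℝ) → ℝ) : Prop :=
  ∀ s s' : I → ℝ, (∀ i, s i ∈ Set.Icc (0 : ℝ) 1) → (∀ i, s' i ∈ Set.Icc (0 : ℝ) 1) →
    (∀ i ∈ P, s i ≤ s' i) → (∀ i ∈ N, s' i ≤ s i) → φ s ≤ φ s'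

/-- If `φ₁, φ₂` are coordinate-wise monotone and `(θ,s,t)` is feasible for IND′,
then the rounded triple `(θ, r(θ,t), t)` is also feasible for IND′ and
`φ₁(r(θ,t)) ≥ φ₁(s)`. -/
theorem stmt_15 {Θ I : Type*} [Fintype I] [DecidableEq I] (P N : Finset I)
    (hPN : P ∪ N = Finset.univ) (hdisj : Disjoint P N)
    (φ₁ φ₂ : (I → ℝ) → ℝ) (α : ℝ)
    (hmono1 : CoordMonotone P N φ₁) (hmono2 : CoordMonotone P N φ₂)
    (F : Θ → I → ℝ) (hF : ∀ θ i, F θ i ∈ Set.Icc (0 : ℝ) 1)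
    (θ : Θ) (s : I → ℝ) (t : ℝ)
    (hfeas : INDFeasible P N φ₂ α F θ s t) :
    INDFeasible P N φ₂ α F θ (rvec F θ t) t ∧ φ₁ s ≤ φ₁ (rvec F θ t) := by
  obtain ⟨hs01, ht, hφ2, hP, hN⟩ := hfeas
  have hr01 : ∀ i, rvec F θ t i ∈ Set.Icc (0 : ℝ) 1 := by
    intro i
    unfold rvec indi
    split <;> norm_num
  have hle : ∀ i ∈ P, s i ≤ rvec F θ t i := hP
  have hge : ∀ i ∈ N, rvec F θ t i ≤ s i := hN
  refine ⟨⟨hr01, ht, le_trans hφ2 (hmono2 s _ hs01 hr01 hle hge), ?_, ?_⟩,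
    hmono1 s _ hs01 hr01 hle hge⟩
  · intro i _; exact le_refl _
  · intro i _; exact le_refl _
end

section
/- Suppose φ₁ and φ₂ are coordinate-wise monotone in the sense that φ_k(s) ≤ φ_k(s') whenever s_i ≤ s'_i for all i ∈ P and s_i ≥ s'_i for all i ∈ 𝒩 (k = 1, 2). Then: (i) if a non-singular pair (θ, t) is feasible for the DMO problem, the triple (θ, r(θ,t), t) is feasible for the hinge reformulation HNG′; and (ii) if a triple (θ, s, t) with (θ, t) non-singular is feasible for HNG′, then (θ, t) is feasible for the DMO problem. -/
open Finset

lemma indi_mem (a t : ℝ) : indi a t ∈ Set.Icc (0:ℝ) 1 := by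
  unfold indi; split <;> norm_num

lemma hng_indi_eq (a t : ℝ) (hne : a ≠ t) : hng t a (indi a t) = 0 := by
  unfold hng indi
  rcases lt_or_gt_of_ne hne with h | h
  · simp only [if_neg (not_lt.mpr h.le)]
    rw [max_eq_right (by linarith), max_eq_right (by linarith)]
    ring
  · simp only [if_pos h]
    rw [max_eq_left (by linarith), max_eq_left (by linarith)]
    ring

lemma le_indi_of_hng (a t s : ℝ) (hs : s ∈ Set.Icc (0:ℝ) 1) (hne : a ≠ t)
    (h : hng t a s ≤ 0) : s ≤ indi a t := by
  obtain ⟨hs0, hs1⟩ := hs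
  unfold hng at h
  unfold indi
  rcases lt_or_gt_of_ne hne with hlt | hgt
  · simp only [if_neg (not_lt.mpr hlt.le)]
    rcases le_or_gt s 0 with h' | h'
    · linarith
    · exfalso
      have h1 : max (s + a - 1 - t) 0 = 0 := max_eq_right (by linarith)
      have h2 : max (s + a - t) 0 < s := by
        rcases le_total (s + a - t) 0 with h3 | h3
        · rw [max_eq_right h3]; exact h'
        · rw [max_eq_left h3]; linarith
      linarith
  · simp only [if_pos hgt]
    have h2 : max (s + a - t) 0 = s + a - t := max_eq_left (by linarith)
    have h1 : s + a - 1 - t ≤ max (s + a - 1 - t) 0 := le_max_left _ _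
    linarith

lemma indi_le_of_hng (a t s : ℝ) (hs : s ∈ Set.Icc (0:ℝ) 1) (hne : a ≠ t)
    (h : 0 ≤ hng t a s) : indi a t ≤ s := by
  obtain ⟨hs0, hs1⟩ := hs
  unfold hng at h
  unfold indi
  rcases lt_or_gt_of_ne hne with hlt | hgt
  · simp only [if_neg (not_lt.mpr hlt.le)]; exact hs0
  · simp only [if_pos hgt]
    have h2 : max (s + a - t) 0 = s + a - t := max_eq_left (by linarith)
    rw [h2] at h
    have h3 : a - t ≤ max (s + a - 1 - t) 0 := by linarith
    have h4 : max (s + a - 1 - t) 0 = s + a - 1 - t := by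
      rcases max_cases (s + a - 1 - t) (0:ℝ) with ⟨he, _⟩ | ⟨he, hle⟩
      · exact he
      · linarith
    linarith

/-- Suppose `φ₁, φ₂` are coordinate-wise monotone. Then:
(i) if a non-singular pair `(θ,t)` is feasible for the DMO problem, the triple
`(θ, r(θ,t), t)` is feasible for the hinge reformulation HNG′; and
(ii) if a triple `(θ,s,t)` with `(θ,t)` non-singular is feasible for HNG′, then
`(θ,t)` is feasible for the DMO problem. -/
theorem stmt_16 {Θ I : Type*} [Fintype I] [DecidableEq I] (P N : Finset I)
    (hPN : P ∪ N = Finset.univ) (hdisj : Disjoint P N)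
    (φ₁ φ₂ : (I → ℝ) → ℝ) (α : ℝ)
    (hmono1 : CoordMonotone P N φ₁) (hmono2 : CoordMonotone P N φ₂)
    (F : Θ → I → ℝ) (hF : ∀ θ i, F θ i ∈ Set.Icc (0 : ℝ) 1) :
    (∀ (θ : Θ) (t : ℝ), NonSingular F θ t → DMOFeasible φ₂ α F θ t →
      HNGFeasible P N φ₂ α F θ (rvec F θ t) t)
    ∧
    (∀ (θ : Θ) (s : I → ℝ) (t : ℝ), NonSingular F θ t →
      HNGFeasible P N φ₂ α F θ s t → DMOFeasible φ₂ α F θ t) := by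
  constructor
  · intro θ t hns ⟨ht, hφ⟩
    refine ⟨fun i => indi_mem _ _, ht, hφ, ?_, ?_⟩
    · intro i _; rw [show rvec F θ t i = indi (F θ i) t from rfl, hng_indi_eq _ _ (hns i)]
    · intro i _; rw [show rvec F θ t i = indi (F θ i) t from rfl, hng_indi_eq _ _ (hns i)]
  · intro θ s t hns ⟨hsIcc, ht, hφ, hP, hN⟩
    refine ⟨ht, le_trans hφ ?_⟩
    apply hmono2 s _ hsIcc (fun i => indi_mem _ _)
    · intro i hi
      exact le_indi_of_hng _ _ _ (hsIcc i) (hns i) (hP i hi)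
    · intro i hi
      exact indi_le_of_hng _ _ _ (hsIcc i) (hns i) (hN i hi)
end

section
/- Suppose φ₁ and φ₂ are coordinate-wise monotone in the sense that φ_k(s) ≤ φ_k(s') whenever s_i ≤ s'_i for all i ∈ P and s_i ≥ s'_i for all i ∈ 𝒩 (k = 1, 2). Then a non-singular pair (θ*, t*) is a global solution of the DMO problem restricted to non-singular points (i.e., (θ*, t*) is DMO-feasible and φ₁(r(θ*,t*)) ≥ φ₁(r(θ,t)) for every non-singular DMO-feasible pair (θ, t)) if and only if there exists s* ∈ [0,1]^I such that (θ*, s*, t*) is a global solution of HNG′ restricted to non-singular points (i.e., (θ*, s*, t*) is HNG′-feasible and φ₁(s*) ≥ φ₁(s) for every HNG′-feasible triple (θ, s, t) with (θ, t) non-singular). -/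
open Finset

lemma hng_le_iff {a t s : ℝ}
    (hs : s ∈ Set.Icc (0:ℝ) 1) (hne : a ≠ t) : hng t a s ≤ 0 ↔ s ≤ indi a t := by
  obtain ⟨hs0, hs1⟩ := hs
  rcases lt_or_gt_of_ne hne with h | h <;>
    unfold hng indi <;>
    rcases le_total (s + a - 1 - t) 0 with h1 | h1 <;>
    rcases le_total (s + a - t) 0 with h2 | h2 <;>
    simp only [max_eq_left, max_eq_right, h1, h2, gt_iff_lt] <;>
    first
    | (rw [if_neg (by linarith : ¬ t < a)]; constructor <;> intro <;> linarith)
    | (rw [if_pos h]; constructor <;> intro <;> linarith)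

lemma hng_ge_iff {a t s : ℝ}
    (hs : s ∈ Set.Icc (0:ℝ) 1) (hne : a ≠ t) : 0 ≤ hng t a s ↔ indi a t ≤ s := by
  obtain ⟨hs0, hs1⟩ := hs
  rcases lt_or_gt_of_ne hne with h | h <;>
    unfold hng indi <;>
    rcases le_total (s + a - 1 - t) 0 with h1 | h1 <;>
    rcases le_total (s + a - t) 0 with h2 | h2 <;>
    simp only [max_eq_left, max_eq_right, h1, h2, gt_iff_lt] <;>
    first
    | (rw [if_neg (by linarith : ¬ t < a)]; constructor <;> intro <;> linarith)
    | (rw [if_pos h]; constructor <;> intro <;> linarith)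

/-- For non-singular points, HNG feasibility equals IND feasibility. -/
lemma hng_iff_ind {Θ I : Type*} (P N : Finset I) (φ₂ : (I → ℝ) → ℝ) (α : ℝ)
    (F : Θ → I → ℝ) (θ : Θ) (s : I → ℝ) (t : ℝ) (hns : NonSingular F θ t) :
    HNGFeasible P N φ₂ α F θ s t ↔ INDFeasible P N φ₂ α F θ s t := by
  constructor
  · rintro ⟨hs, ht, hφ, hP, hN⟩
    exact ⟨hs, ht, hφ,
      fun i hi => (hng_le_iff (hs i) (hns i)).1 (hP i hi),
      fun i hi => (hng_ge_iff (hs i) (hns i)).1 (hN i hi)⟩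
  · rintro ⟨hs, ht, hφ, hP, hN⟩
    exact ⟨hs, ht, hφ,
      fun i hi => (hng_le_iff (hs i) (hns i)).2 (hP i hi),
      fun i hi => (hng_ge_iff (hs i) (hns i)).2 (hN i hi)⟩

/-- rvec is HNG feasible for non-singular DMO feasible points. -/
lemma rvec_hng_feasible {Θ I : Type*} (P N : Finset I) (φ₂ : (I → ℝ) → ℝ) (α : ℝ)
    (F : Θ → I → ℝ) (θ : Θ) (t : ℝ) (hns : NonSingular F θ t)
    (hfeas : DMOFeasible φ₂ α F θ t) :
    HNGFeasible P N φ₂ α F θ (rvec F θ t) t := by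
  rw [hng_iff_ind _ _ _ _ _ _ _ _ hns]
  exact ⟨fun i => indi_mem _ _, hfeas.1, hfeas.2, fun i _ => le_refl _, fun i _ => le_refl _⟩

/-- Suppose `φ₁, φ₂` are coordinate-wise monotone. Then a non-singular pair
`(θ*, t*)` is a global solution of the DMO problem restricted to non-singular
points iff there exists `s*` such that `(θ*, s*, t*)` is a global solution of the
hinge reformulation HNG′ restricted to non-singular points. -/
theorem stmt_17 {Θ I : Type*} [Fintype I] [DecidableEq I] (P N : Finset I)
    (hPN : P ∪ N = Finset.univ) (hdisj : Disjoint P N)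
    (φ₁ φ₂ : (I → ℝ) → ℝ) (α : ℝ)
    (hmono1 : CoordMonotone P N φ₁) (hmono2 : CoordMonotone P N φ₂)
    (F : Θ → I → ℝ) (hF : ∀ θ i, F θ i ∈ Set.Icc (0 : ℝ) 1)
    (θs : Θ) (ts : ℝ) (hns : NonSingular F θs ts) :
    (DMOFeasible φ₂ α F θs ts ∧
      ∀ θ t, NonSingular F θ t → DMOFeasible φ₂ α F θ t →
        φ₁ (rvec F θ t) ≤ φ₁ (rvec F θs ts))
    ↔
    (∃ ss : I → ℝ, HNGFeasible P N φ₂ α F θs ss ts ∧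
      ∀ θ (s : I → ℝ) t, NonSingular F θ t → HNGFeasible P N φ₂ α F θ s t →
        φ₁ s ≤ φ₁ ss) := by
  constructor
  · rintro ⟨hfeas, hopt⟩
    refine ⟨rvec F θs ts, rvec_hng_feasible P N φ₂ α F θs ts hns hfeas, ?_⟩
    intro θ s t hns' hf
    obtain ⟨hs, ht, hφ2, hP, hN⟩ := (hng_iff_ind P N φ₂ α F θ s t hns').1 hf
    have hrm : ∀ i, rvec F θ t i ∈ Set.Icc (0:ℝ) 1 := fun i => indi_mem _ _
    have h1 : φ₁ s ≤ φ₁ (rvec F θ t) := hmono1 s _ hs hrm hP hN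
    have h2 : φ₂ s ≤ φ₂ (rvec F θ t) := hmono2 s _ hs hrm hP hN
    exact h1.trans (hopt θ t hns' ⟨ht, le_trans hφ2 h2⟩)
  · rintro ⟨ss, hf, hopt⟩
    obtain ⟨hs, ht, hφ2, hP, hN⟩ := (hng_iff_ind P N φ₂ α F θs ss ts hns).1 hf
    have hrm : ∀ i, rvec F θs ts i ∈ Set.Icc (0:ℝ) 1 := fun i => indi_mem _ _
    have hfeas : DMOFeasible φ₂ α F θs ts :=
      ⟨ht, le_trans hφ2 (hmono2 ss _ hs hrm hP hN)⟩
    refine ⟨hfeas, fun θ t hns' hf' => ?_⟩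
    have := hopt θ (rvec F θ t) t hns' (rvec_hng_feasible P N φ₂ α F θ t hns' hf')
    exact this.trans (hmono1 ss _ hs hrm hP hN)
end
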